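/- Let n ≥ 2, let b ∈ ℝ^n with ‖b‖ = 1, let ε ∈ (0,1), and let 1 ≤ k ≤ n−1. Then for every algorithm φ : (ℝ^n)^k → ℝ^n using Krylov information there exists an n×n real symmetric positive definite matrix A such that ‖A φ(Ab, A²b, …, A^k b) − b‖ > ε. That is, on the class of all n×n symmetric positive definite matrices, n matrix-vector multiplications are needed to compute an ε-approximation to the linear system A x = b with residual at most ε: the class SPD is too large for fewer than n Krylov steps to suffice. -/

import Mathlib

/-- The Euclidean norm on `ℝ^n`. -/
noncomputable def euclNorm {n : ℕ} (v : Fin n → ℝ) : ℝ := Real.sqrt (∑ i, v i ^ 2)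

open Matrix Finset

lemma stmt8_dot_sum {n N : ℕ} (u : Fin n → ℝ) (f : Fin N → Fin n → ℝ) :
    u ⬝ᵥ (∑ j, f j) = ∑ j, u ⬝ᵥ f j := by
  simp only [dotProduct, Finset.sum_apply, Finset.mul_sum]
  exact Finset.sum_comm

lemma stmt8_sum_dot {n N : ℕ} (u : Fin n → ℝ) (f : Fin N → Fin n → ℝ) :
    (∑ j, f j) ⬝ᵥ u = ∑ j, f j ⬝ᵥ u := by
  simp only [dotProduct, Finset.sum_apply, Finset.sum_mul]
  exact Finset.sum_comm

lemma stmt8_vecMulVec_mulVec {n : ℕ} (u v x : Fin n → ℝ) :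
    (vecMulVec u v) *ᵥ x = (v ⬝ᵥ x) • u := by
  ext i
  simp only [Matrix.mulVec, Matrix.vecMulVec_apply, dotProduct, Pi.smul_apply,
    smul_eq_mul, Finset.mul_sum, mul_assoc]
  rw [Finset.sum_mul]
  exact Finset.sum_congr rfl fun j _ => by ring

lemma stmt8_sum_mulVec {n N : ℕ} (A : Fin N → Matrix (Fin n) (Fin n) ℝ) (x : Fin n → ℝ) :
    (∑ m, A m) *ᵥ x = ∑ m, (A m *ᵥ x) := by
  ext i
  simp only [Matrix.mulVec, dotProduct, Finset.sum_apply, Matrix.sum_apply,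
    Finset.sum_mul]
  exact Finset.sum_comm

lemma stmt8_dot_self_nonneg {n : ℕ} (v : Fin n → ℝ) : 0 ≤ v ⬝ᵥ v :=
  Finset.sum_nonneg fun _ _ => mul_self_nonneg _

lemma stmt8_euclNorm_sq {n : ℕ} (v : Fin n → ℝ) : euclNorm v ^ 2 = v ⬝ᵥ v := by
  rw [euclNorm, Real.sq_sqrt (Finset.sum_nonneg fun _ _ => sq_nonneg _)]
  simp [dotProduct, sq]

lemma stmt8_lt_euclNorm {n : ℕ} (ε : ℝ) (hε : 0 ≤ ε) (u w : Fin n → ℝ)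
    (h : ε ^ 2 * (u ⬝ᵥ u) < (u ⬝ᵥ w) ^ 2) : ε < euclNorm w := by
  have hcs : (u ⬝ᵥ w) ^ 2 ≤ (u ⬝ᵥ u) * (w ⬝ᵥ w) := by
    simpa [dotProduct, sq] using Finset.sum_mul_sq_le_sq_mul_sq Finset.univ u w
  have huu := stmt8_dot_self_nonneg u
  have hww := stmt8_dot_self_nonneg w
  have h2 : ε ^ 2 < w ⬝ᵥ w := by
    by_contra hc
    push_neg at hc
    have := mul_le_mul_of_nonneg_left hc huu
    nlinarith
  have := stmt8_euclNorm_sq w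
  have hnn : 0 ≤ euclNorm w := Real.sqrt_nonneg _
  nlinarith

set_option maxHeartbeats 2000000 in
/-- **The class SPD is too large: `n` matrix-vector multiplications are needed for
linear systems.**  Let `‖b‖ = 1`, `ε ∈ (0,1)` and `1 ≤ k ≤ n − 1`.  For every
algorithm `φ` using Krylov information `[Ab, A²b, …, A^k b]` there is a symmetric
positive definite `A` whose computed approximation has residual larger than `ε`. -/
theorem stmt_8 (n : ℕ) (hn : 2 ≤ n) (b : Fin n → ℝ) (hb : euclNorm b = 1)
    (ε : ℝ) (hε : ε ∈ Set.Ioo (0 : ℝ) 1) (k : ℕ) (hk1 : 1 ≤ k) (hk2 : k ≤ n - 1)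
    (φ : (Fin k → (Fin n → ℝ)) → (Fin n → ℝ)) :
    ∃ A : Matrix (Fin n) (Fin n) ℝ, A.PosDef ∧
      ε < euclNorm (A.mulVec (φ (fun i => (A ^ ((i : ℕ) + 1)).mulVec b)) - b) := by
  obtain ⟨hε0, hε1⟩ := hε
  have hkn : k + 1 ≤ n := by omega
  haveI : NeZero n := ⟨by omega⟩
  -- orthonormal basis extending b
  have hfr : Module.finrank ℝ (EuclideanSpace ℝ (Fin n)) = Fintype.card (Fin n) := by
    simp [finrank_euclideanSpace]
  set bE : EuclideanSpace ℝ (Fin n) := WithLp.toLp 2 b with hbE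
  have hbnorm : ‖bE‖ = 1 := by
    rw [EuclideanSpace.norm_eq]
    simpa [euclNorm, Real.norm_eq_abs, sq_abs] using hb
  have horth : Orthonormal ℝ (({0} : Set (Fin n)).restrict
      (fun _ : Fin n => bE)) := by
    constructor
    · intro i; exact hbnorm
    · intro i j hij
      exact absurd (Subtype.ext (by
        have hi : (i : Fin n) = 0 := i.2
        have hj : (j : Fin n) = 0 := j.2
        rw [hi, hj])) hij
  obtain ⟨Q, hQ0⟩ := Orthonormal.exists_orthonormalBasis_extension_of_card_eq hfr horth
  have hQb : Q 0 = bE := hQ0 0 rfl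
  set q : Fin (k+1) → (Fin n → ℝ) := fun i => (Q (Fin.castLE hkn i) : Fin n → ℝ) with hqdef
  have hq : ∀ i j, q i ⬝ᵥ q j = if i = j then 1 else 0 := by
    intro i j
    have h := orthonormal_iff_ite.mp Q.orthonormal (Fin.castLE hkn i) (Fin.castLE hkn j)
    have h2 : (inner ℝ (Q (Fin.castLE hkn i)) (Q (Fin.castLE hkn j)) : ℝ) = q i ⬝ᵥ q j := by
      simp [PiLp.inner_apply, RCLike.inner_apply, dotProduct, hqdef, mul_comm]
    rw [h2] at h
    rw [h]
    simp [Fin.castLE_inj]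
  have hq0 : q 0 = b := by
    rw [hqdef]
    show (Q (Fin.castLE hkn 0) : Fin n → ℝ) = b
    rw [show Fin.castLE hkn 0 = (0 : Fin n) from rfl, hQb]
  -- parameters
  set δ : ℝ := Real.sqrt ((1 - ε^2)/2) with hδdef
  have hd2pos : (0:ℝ) < (1 - ε^2)/2 := by nlinarith
  have hδpos : 0 < δ := Real.sqrt_pos.2 hd2pos
  have hδsq : δ^2 = (1 - ε^2)/2 := Real.sq_sqrt hd2pos.le
  have hδlt1 : δ^2 < 1 := by nlinarith
  set ρ : ℝ := ((1 - ε^2)/2)⁻¹ with hρdef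
  have hρ : ρ * δ^2 = 1 := by rw [hδsq]; exact inv_mul_cancel₀ (ne_of_gt hd2pos)
  have hρpos : 0 < ρ := by positivity
  have hkey : ∀ N : ℕ, ρ^(N+1) * (δ * δ^(N+1)) = ρ^N * δ^N := by
    intro N
    have h : ρ^(N+1) * (δ * δ^(N+1)) = (ρ^N * δ^N) * (ρ * δ^2) := by ring
    rw [h, hρ, mul_one]
  -- the family of matrices
  set K : Fin (k+1) := Fin.last k with hKdef
  set g : Fin k → (Fin n → ℝ) := fun m =>
    ρ^(m:ℕ) • q m.castSucc - (δ * ρ^((m:ℕ)+1)) • q m.succ with hgdef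
  set c1 : ℝ := (1 - δ^2) * ρ^(2*k) with hc1def
  have hc1pos : 0 < c1 := by
    have h1 : (0:ℝ) < 1 - δ^2 := by nlinarith
    rw [hc1def]; exact mul_pos h1 (pow_pos hρpos _)
  set M : ℝ → Matrix (Fin n) (Fin n) ℝ := fun t =>
    1 - (∑ i, vecMulVec (q i) (q i)) + (∑ m, vecMulVec (g m) (g m))
      + (c1 + t) • vecMulVec (q K) (q K) with hMdef
  have hMv : ∀ t x, M t *ᵥ x =
      x - (∑ i, (q i ⬝ᵥ x) • q i) + (∑ m, (g m ⬝ᵥ x) • g m)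
        + ((c1 + t) * (q K ⬝ᵥ x)) • q K := by
    intro t x
    rw [hMdef]
    simp only [Matrix.add_mulVec, Matrix.sub_mulVec, Matrix.one_mulVec,
      stmt8_sum_mulVec, stmt8_vecMulVec_mulVec, Matrix.smul_mulVec, smul_smul]
  -- dot product facts
  have hgq : ∀ (m : Fin k) (j : Fin (k+1)), g m ⬝ᵥ q j =
      (if m.castSucc = j then ρ^(m:ℕ) else 0) - (if m.succ = j then δ * ρ^((m:ℕ)+1) else 0) := by
    intro m j
    rw [hgdef]
    simp only [sub_dotProduct, smul_dotProduct, hq, smul_eq_mul,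
      mul_ite, mul_one, mul_zero]
  have hqg : ∀ (j : Fin (k+1)) (m : Fin k), q j ⬝ᵥ g m = g m ⬝ᵥ q j := fun j m =>
    dotProduct_comm _ _
  have hgx : ∀ (m : Fin k) (x : Fin n → ℝ), g m ⬝ᵥ x =
      ρ^(m:ℕ) * (q m.castSucc ⬝ᵥ x) - (δ * ρ^((m:ℕ)+1)) * (q m.succ ⬝ᵥ x) := by
    intro m x
    rw [hgdef]
    simp [sub_dotProduct, smul_dotProduct]
  set u : Fin n → ℝ := ∑ j : Fin (k+1), (δ^(j:ℕ)) • q j with hudef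
  have hqu : ∀ i, q i ⬝ᵥ u = δ^(i:ℕ) := by
    intro i
    rw [hudef, stmt8_dot_sum]
    simp only [dotProduct_smul, hq, smul_eq_mul, mul_ite, mul_one, mul_zero]
    simp [Finset.sum_ite_eq]
  have hgu : ∀ m, g m ⬝ᵥ u = 0 := by
    intro m
    rw [hgdef]
    simp only [sub_dotProduct, smul_dotProduct, smul_eq_mul]
    rw [hqu, hqu, Fin.coe_castSucc, Fin.val_succ]
    have := hkey (m:ℕ)
    ring_nf
    ring_nf at this
    linarith
  -- Bessel-type inequality
  have hbessel : ∀ x : Fin n → ℝ, ∑ i, (q i ⬝ᵥ x)^2 ≤ x ⬝ᵥ x := by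
    intro x
    set y : Fin (k+1) → ℝ := fun i => q i ⬝ᵥ x with hydef
    have h0 : 0 ≤ (x - ∑ i, y i • q i) ⬝ᵥ (x - ∑ i, y i • q i) := stmt8_dot_self_nonneg _
    have hexp : (x - ∑ i, y i • q i) ⬝ᵥ (x - ∑ i, y i • q i)
        = x ⬝ᵥ x - ∑ i, (y i)^2 := by
      rw [sub_dotProduct, dotProduct_sub, dotProduct_sub,
        stmt8_dot_sum, stmt8_sum_dot, stmt8_sum_dot]
      have e1 : ∀ i : Fin (k+1), x ⬝ᵥ (y i • q i) = y i * y i := by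
        intro i
        rw [dotProduct_smul, smul_eq_mul, dotProduct_comm]
      have e2 : ∀ i : Fin (k+1), (y i • q i) ⬝ᵥ x = y i * y i := by
        intro i
        rw [smul_dotProduct, smul_eq_mul]
      have e3 : ∀ i : Fin (k+1), (y i • q i) ⬝ᵥ (∑ j, y j • q j) = y i * y i := by
        intro i
        rw [stmt8_dot_sum]
        simp only [smul_dotProduct, dotProduct_smul, hq, smul_eq_mul,
          mul_ite, mul_one, mul_zero]
        simp [Finset.sum_ite_eq]
      simp only [e1, e2, e3]
      ring_nf
    linarith [h0, hexp.symm.le]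
  -- quadratic form expansion
  have hquad : ∀ t x, x ⬝ᵥ (M t *ᵥ x) =
      (x ⬝ᵥ x - ∑ i, (q i ⬝ᵥ x)^2) + (∑ m, (g m ⬝ᵥ x)^2) + (c1 + t) * (q K ⬝ᵥ x)^2 := by
    intro t x
    rw [hMv]
    rw [dotProduct_add, dotProduct_add, dotProduct_sub,
      stmt8_dot_sum, stmt8_dot_sum]
    have e1 : ∀ i : Fin (k+1), x ⬝ᵥ ((q i ⬝ᵥ x) • q i) = (q i ⬝ᵥ x)^2 := by
      intro i; rw [dotProduct_smul, smul_eq_mul, dotProduct_comm]; ring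
    have e2 : ∀ m : Fin k, x ⬝ᵥ ((g m ⬝ᵥ x) • g m) = (g m ⬝ᵥ x)^2 := by
      intro m; rw [dotProduct_smul, smul_eq_mul, dotProduct_comm]; ring
    have e3 : x ⬝ᵥ (((c1 + t) * (q K ⬝ᵥ x)) • q K) = (c1 + t) * (q K ⬝ᵥ x)^2 := by
      rw [dotProduct_smul, smul_eq_mul, dotProduct_comm]; ring
    simp only [e1, e2, e3]
  -- zero propagation
  have hzero : ∀ x : Fin n → ℝ, (∀ m : Fin k, g m ⬝ᵥ x = 0) → q K ⬝ᵥ x = 0 →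
      ∀ i : Fin (k+1), q i ⬝ᵥ x = 0 := by
    intro x hg0 hK0
    set Y : ℕ → ℝ := fun j => if h : j < k+1 then q ⟨j, h⟩ ⬝ᵥ x else 0 with hYdef
    have hYe : ∀ (i : Fin (k+1)), Y (i:ℕ) = q i ⬝ᵥ x := by
      intro i
      rw [hYdef]
      simp only
      rw [dif_pos i.isLt]
    have hYk : Y k = 0 := by
      have : ((K : Fin (k+1)) : ℕ) = k := by rw [hKdef]; rfl
      rw [← this, hYe]
      exact hK0
    have hYstep : ∀ j, j < k → Y (j+1) = 0 → Y j = 0 := by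
      intro j hj hY1
      have h1 := hg0 ⟨j, hj⟩
      rw [hgx] at h1
      have e1 : q ((⟨j, hj⟩ : Fin k).castSucc) ⬝ᵥ x = Y j := by
        rw [← hYe]; simp
      have e2 : q ((⟨j, hj⟩ : Fin k).succ) ⬝ᵥ x = Y (j+1) := by
        rw [← hYe]; simp
      rw [e1, e2, hY1, mul_zero, sub_zero, mul_eq_zero] at h1
      rcases h1 with h | h
      · exact absurd h (ne_of_gt (pow_pos hρpos _))
      · exact h
    have hYall : ∀ d, d ≤ k → Y (k - d) = 0 := by
      intro d
      induction d with
      | zero => intro _; simpa using hYk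
      | succ d ih =>
        intro hdk
        apply hYstep _ (by omega)
        rw [show k - (d+1) + 1 = k - d by omega]
        exact ih (by omega)
    intro i
    have := hYall (k - (i:ℕ)) (by omega)
    rw [show k - (k - (i:ℕ)) = (i:ℕ) by omega, hYe] at this
    exact this
  have hdotpos : ∀ x : Fin n → ℝ, x ≠ 0 → 0 < x ⬝ᵥ x := by
    intro x hx
    rcases lt_or_eq_of_le (stmt8_dot_self_nonneg x) with h | h
    · exact h
    · exact absurd (dotProduct_self_eq_zero.mp h.symm) hx
  -- positive definiteness
  have hPD : ∀ t, 0 ≤ t → (M t).PosDef := by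
    intro t ht
    refine Matrix.PosDef.of_dotProduct_mulVec_pos ?_ ?_
    · show (M t)ᴴ = M t
      rw [hMdef]
      simp only
      ext i j
      simp only [Matrix.conjTranspose_apply, Matrix.add_apply, Matrix.sub_apply,
        Matrix.smul_apply, Matrix.sum_apply, Matrix.vecMulVec_apply, smul_eq_mul,
        star_trivial]
      by_cases h : i = j
      · subst h; ring_nf
      · rw [Matrix.one_apply_ne h, Matrix.one_apply_ne (Ne.symm h)]
        have c1' : ∀ (N : ℕ) (f : Fin N → Fin n → ℝ), ∑ l, f l j * f l i = ∑ l, f l i * f l j :=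
          fun N f => Finset.sum_congr rfl fun l _ => mul_comm _ _
        rw [c1' _ q, c1' _ g]
        ring
    · intro x hx
      have hsx : star x = x := by
        funext i; simp
      rw [hsx, hquad t x]
      have hA : 0 ≤ x ⬝ᵥ x - ∑ i, (q i ⬝ᵥ x)^2 := by
        have := hbessel x
        linarith
      have hB : 0 ≤ ∑ m : Fin k, (g m ⬝ᵥ x)^2 :=
        Finset.sum_nonneg fun m _ => sq_nonneg _
      have hC : 0 ≤ (c1 + t) * (q K ⬝ᵥ x)^2 :=
        mul_nonneg (by linarith) (sq_nonneg _)
      by_cases hgall : ∀ m : Fin k, g m ⬝ᵥ x = 0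
      · by_cases hKx : q K ⬝ᵥ x = 0
        · have hy0 := hzero x hgall hKx
          have h1 : ∑ i : Fin (k+1), (q i ⬝ᵥ x)^2 = 0 :=
            Finset.sum_eq_zero fun i _ => by rw [hy0 i]; ring
          have h2 : ∑ m : Fin k, (g m ⬝ᵥ x)^2 = 0 :=
            Finset.sum_eq_zero fun m _ => by rw [hgall m]; ring
          rw [h1, h2, hKx]
          have := hdotpos x hx
          ring_nf
          linarith
        · have hCpos : 0 < (c1 + t) * (q K ⬝ᵥ x)^2 :=
            mul_pos (by linarith) (by positivity)
          linarith
      · push_neg at hgall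
        obtain ⟨m0, hm0⟩ := hgall
        have hBpos : 0 < ∑ m : Fin k, (g m ⬝ᵥ x)^2 :=
          Finset.sum_pos' (fun m _ => sq_nonneg _) ⟨m0, Finset.mem_univ m0, by positivity⟩
        linarith
  -- action on basis vectors
  have hMq : ∀ t (j : Fin (k+1)), M t *ᵥ q j =
      (∑ m : Fin k, (g m ⬝ᵥ q j) • g m) + ((c1 + t) * (if K = j then 1 else 0)) • q K := by
    intro t j
    rw [hMv]
    have hcollapse : ∑ i : Fin (k+1), (q i ⬝ᵥ q j) • q i = q j := by
      simp only [hq, ite_smul, one_smul, zero_smul]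
      simp [Finset.sum_ite_eq]
    rw [hcollapse, hq]
    abel
  -- the Krylov subspaces
  set V : ℕ → Submodule ℝ (Fin n → ℝ) := fun m => Submodule.span ℝ (q '' {j | (j:ℕ) ≤ m})
    with hVdef
  have hqV : ∀ (m : ℕ) (j : Fin (k+1)), (j:ℕ) ≤ m → q j ∈ V m := fun m j hj =>
    Submodule.subset_span ⟨j, hj, rfl⟩
  have hgVmem : ∀ (N : ℕ) (m' : Fin k), (m':ℕ) + 1 ≤ N → g m' ∈ V N := by
    intro N m' h
    rw [hgdef]
    exact Submodule.sub_mem _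
      (Submodule.smul_mem _ _ (hqV N _ (by simp only [Fin.coe_castSucc]; omega)))
      (Submodule.smul_mem _ _ (hqV N _ (by simp only [Fin.val_succ]; omega)))
  have hmap : ∀ t (m : ℕ), ∀ v ∈ V m, M t *ᵥ v ∈ V (m+1) := by
    intro t m v hv
    induction hv using Submodule.span_induction with
    | mem v hv =>
      obtain ⟨j, hj, rfl⟩ := hv
      simp only [Set.mem_setOf_eq] at hj
      rw [hMq]
      apply Submodule.add_mem
      · apply Submodule.sum_mem
        intro m' _
        by_cases hm' : (m':ℕ) ≤ (j:ℕ)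
        · exact Submodule.smul_mem _ _ (hgVmem (m+1) m' (by omega))
        · have hzero' : g m' ⬝ᵥ q j = 0 := by
            rw [hgq, if_neg, if_neg]
            · ring
            · intro he
              have : (m':ℕ) + 1 = (j:ℕ) := by rw [← he]; simp [Fin.val_succ]
              omega
            · intro he
              have : (m':ℕ) = (j:ℕ) := by rw [← he]; simp
              omega
          rw [hzero', zero_smul]
          exact Submodule.zero_mem _
      · by_cases hK : K = j
        · rw [hK]
          exact Submodule.smul_mem _ _ (hqV (m+1) j (by omega))
        · rw [if_neg hK, mul_zero, zero_smul]
          exact Submodule.zero_mem _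
    | zero =>
      rw [Matrix.mulVec_zero]
      exact Submodule.zero_mem _
    | add x y hx hy ihx ihy =>
      rw [Matrix.mulVec_add]
      exact Submodule.add_mem _ ihx ihy
    | smul a x hx ih =>
      rw [Matrix.mulVec_smul]
      exact Submodule.smul_mem _ _ ih
  have hdiffV : ∀ t (m : ℕ), m < k → ∀ v ∈ V m, M t *ᵥ v = M 0 *ᵥ v := by
    intro t m hm v hv
    have hKv : q K ⬝ᵥ v = 0 := by
      induction hv using Submodule.span_induction with
      | mem w hw =>
        obtain ⟨j, hj, rfl⟩ := hw
        simp only [Set.mem_setOf_eq] at hj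
        rw [hq, if_neg]
        intro he
        have : (K:ℕ) = (j:ℕ) := by rw [he]
        have hKk : (K:ℕ) = k := by rw [hKdef]; rfl
        omega
      | zero => simp
      | add x y hx hy ihx ihy => rw [dotProduct_add, ihx, ihy]; ring
      | smul a x hx ih => rw [dotProduct_smul, ih]; simp
    rw [hMv, hMv, hKv, mul_zero, mul_zero]
  -- the information is independent of t
  have hinfo : ∀ m : ℕ, m ≤ k → ∀ t, 0 ≤ t →
      (M t ^ m) *ᵥ b = (M 0 ^ m) *ᵥ b ∧ (M 0 ^ m) *ᵥ b ∈ V m := by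
    intro m
    induction m with
    | zero =>
      intro _ t _
      constructor
      · rw [pow_zero, pow_zero]
      · rw [pow_zero, Matrix.one_mulVec, ← hq0]
        exact hqV 0 0 (by simp)
    | succ m ih =>
      intro hmk t ht
      obtain ⟨ihe, ihm⟩ := ih (by omega) t ht
      have hpow : ∀ s : ℝ, (M s ^ (m+1)) *ᵥ b = M s *ᵥ ((M s ^ m) *ᵥ b) := by
        intro s
        rw [Matrix.mulVec_mulVec, ← pow_succ']
      constructor
      · rw [hpow, hpow, ihe, hdiffV t m (by omega) _ ihm]
      · rw [hpow]
        exact hmap 0 m _ ihm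
  -- the output of the algorithm on the common information
  set xh : Fin n → ℝ := φ (fun i : Fin k => (M 0 ^ ((i : ℕ) + 1)).mulVec b) with hxh
  have hKb : q K ⬝ᵥ b = 0 := by
    rw [← hq0, hq, if_neg]
    intro he
    have : (K:ℕ) = 0 := by rw [he]; rfl
    have hKk : (K:ℕ) = k := by rw [hKdef]; rfl
    omega
  by_cases hs : q K ⬝ᵥ xh = 0
  · -- use M 0
    refine ⟨M 0, hPD 0 le_rfl, ?_⟩
    rw [← hxh]
    apply stmt8_lt_euclNorm ε hε0.le u
    have hub : u ⬝ᵥ b = 1 := by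
      rw [← hq0, dotProduct_comm, hqu]
      simp
    have huMx : u ⬝ᵥ (M 0 *ᵥ xh) = 0 := by
      rw [hMv]
      rw [dotProduct_add, dotProduct_add, dotProduct_sub,
        stmt8_dot_sum, stmt8_dot_sum]
      have e1 : ∀ i : Fin (k+1), u ⬝ᵥ ((q i ⬝ᵥ xh) • q i) = δ^(i:ℕ) * (q i ⬝ᵥ xh) := by
        intro i
        rw [dotProduct_smul, smul_eq_mul, dotProduct_comm u (q i), hqu]
        ring
      have e2 : ∀ m : Fin k, u ⬝ᵥ ((g m ⬝ᵥ xh) • g m) = 0 := by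
        intro m
        rw [dotProduct_smul, smul_eq_mul, dotProduct_comm u (g m), hgu]
        ring
      have e3 : u ⬝ᵥ (((c1 + 0) * (q K ⬝ᵥ xh)) • q K) = 0 := by
        rw [dotProduct_smul, smul_eq_mul, hs]
        ring
      have e4 : u ⬝ᵥ xh = ∑ i : Fin (k+1), δ^(i:ℕ) * (q i ⬝ᵥ xh) := by
        rw [hudef, stmt8_sum_dot]
        exact Finset.sum_congr rfl fun i _ => by
          rw [smul_dotProduct, smul_eq_mul]
      simp only [e1, e2, e3, e4]
      simp
    have hdot : u ⬝ᵥ (M 0 *ᵥ xh - b) = -1 := by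
      rw [dotProduct_sub, huMx, hub]
      ring
    have huu : u ⬝ᵥ u = ∑ j : Fin (k+1), (δ^2)^(j:ℕ) := by
      rw [hudef, stmt8_sum_dot]
      refine Finset.sum_congr rfl fun j _ => ?_
      rw [smul_dotProduct, smul_eq_mul]
      have : (∑ j : Fin (k + 1), δ ^ (j:ℕ) • q j) = u := by rw [hudef]
      rw [this, hqu]
      ring
    have hgeom : (1 - δ^2) * (∑ j : Fin (k+1), (δ^2)^(j:ℕ)) = 1 - (δ^2)^(k+1) := by
      rw [Fin.sum_univ_eq_sum_range]
      have := geom_sum_mul (δ^2) (k+1)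
      nlinarith [this]
    have hSnonneg : 0 ≤ ∑ j : Fin (k+1), (δ^2)^(j:ℕ) :=
      Finset.sum_nonneg fun j _ => by positivity
    have hεδ : ε^2 < 1 - δ^2 := by
      rw [hδsq]; nlinarith
    have hpowpos : 0 < (δ^2)^(k+1) := by positivity
    have hfin : ε^2 * (u ⬝ᵥ u) < 1 := by
      rw [huu]
      calc ε^2 * (∑ j : Fin (k+1), (δ^2)^(j:ℕ))
          ≤ (1 - δ^2) * (∑ j : Fin (k+1), (δ^2)^(j:ℕ)) :=
            mul_le_mul_of_nonneg_right hεδ.le hSnonneg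
        _ = 1 - (δ^2)^(k+1) := hgeom
        _ < 1 := by linarith
    rw [hdot]
    calc ε^2 * (u ⬝ᵥ u) < 1 := hfin
      _ = (-1:ℝ)^2 := by ring
  · -- use M t for large t
    set d : ℝ := q K ⬝ᵥ (M 0 *ᵥ xh) with hd
    set t : ℝ := (ε + 1 + |d|) / |q K ⬝ᵥ xh| with htdef
    have hsabs : 0 < |q K ⬝ᵥ xh| := abs_pos.2 hs
    have ht : 0 ≤ t := by
      rw [htdef]
      have : (0:ℝ) ≤ ε + 1 + |d| := by positivity
      positivity
    refine ⟨M t, hPD t ht, ?_⟩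
    have harg : (fun i : Fin k => (M t ^ ((i : ℕ) + 1)).mulVec b)
        = (fun i : Fin k => (M 0 ^ ((i : ℕ) + 1)).mulVec b) := by
      funext i
      exact (hinfo ((i:ℕ)+1) (by omega) t ht).1
    rw [harg, ← hxh]
    apply stmt8_lt_euclNorm ε hε0.le (q K)
    have hqKK : q K ⬝ᵥ q K = 1 := by rw [hq]; simp
    have hMt0 : M t *ᵥ xh = M 0 *ᵥ xh + (t * (q K ⬝ᵥ xh)) • q K := by
      rw [hMv, hMv]
      rw [show (c1 + t) * (q K ⬝ᵥ xh) = (c1 + 0) * (q K ⬝ᵥ xh) + t * (q K ⬝ᵥ xh) by ring,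
        add_smul]
      abel
    have hdotK : q K ⬝ᵥ (M t *ᵥ xh - b) = d + t * (q K ⬝ᵥ xh) := by
      rw [dotProduct_sub, hMt0, dotProduct_add, dotProduct_smul,
        smul_eq_mul, hqKK, hKb, hd]
      ring
    have hts : |t * (q K ⬝ᵥ xh)| = ε + 1 + |d| := by
      rw [abs_mul, abs_of_nonneg ht, htdef, div_mul_cancel₀ _ (ne_of_gt hsabs)]
    have habs : ε < |d + t * (q K ⬝ᵥ xh)| := by
      have h1 : |t * (q K ⬝ᵥ xh)| ≤ |d + t * (q K ⬝ᵥ xh)| + |d| := by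
        calc |t * (q K ⬝ᵥ xh)| = |(d + t * (q K ⬝ᵥ xh)) + (-d)| := by ring_nf
          _ ≤ |d + t * (q K ⬝ᵥ xh)| + |(-d)| := abs_add_le _ _
          _ = |d + t * (q K ⬝ᵥ xh)| + |d| := by rw [abs_neg]
      rw [hts] at h1
      linarith
    rw [hdotK, hqKK, mul_one]
    have := abs_nonneg (d + t * (q K ⬝ᵥ xh))
    nlinarith [sq_abs (d + t * (q K ⬝ᵥ xh))]
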